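/- Let W_∞ = ⟨s, t | s² = t² = 1⟩ be the infinite dihedral group, whose reflections are the elements t(n) = (st)^n s for n ∈ ℤ (the elements of odd length in s, t). Then every triple (r_1, r_2, r_3) of reflections of W_∞ lies in the same Hurwitz orbit as some triple of the form (r, r, r′) whose first two entries are equal. -/

import Mathlib

/-- A single Hurwitz move `σ_i` on tuples in a group. -/
def HurwitzMove {G : Type*} [Group G] {m : ℕ} (t t' : Fin m → G) : Prop :=
  ∃ (i : Fin m) (h : (i : ℕ) + 1 < m),
    t' i = t ⟨(i : ℕ) + 1, h⟩ ∧
      t' ⟨(i : ℕ) + 1, h⟩ = (t ⟨(i : ℕ) + 1, h⟩)⁻¹ * t i * t ⟨(i : ℕ) + 1, h⟩ ∧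
      ∀ j : Fin m, j ≠ i → j ≠ ⟨(i : ℕ) + 1, h⟩ → t' j = t j

/-- Two tuples lie in the same Hurwitz orbit when they are related by a finite sequence of
Hurwitz moves and their inverses. -/
def SameHurwitzOrbit {G : Type*} [Group G] {m : ℕ} (t t' : Fin m → G) : Prop :=
  Relation.EqvGen HurwitzMove t t'

/-- The relations `s² = t² = 1` presenting the infinite dihedral group, on the generator set
`Bool` (with `true ↦ s`, `false ↦ t`). -/
def dihedralRels : Set (FreeGroup Bool) :=
  {FreeGroup.of true * FreeGroup.of true, FreeGroup.of false * FreeGroup.of false}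

/-- The infinite dihedral group `W_∞ = ⟨s, t ∣ s² = t² = 1⟩`. -/
abbrev Dinf : Type := PresentedGroup dihedralRels

/-- The reflections of `W_∞`: the elements `t(n) = (st)^n s`, `n ∈ ℤ`. -/
def DinfReflections : Set Dinf :=
  Set.range fun n : ℤ =>
    (PresentedGroup.of (rels := dihedralRels) true * PresentedGroup.of false) ^ n *
      PresentedGroup.of true

namespace St17
abbrev S : Dinf := PresentedGroup.of true
abbrev Tg : Dinf := PresentedGroup.of false

lemma hS : S * S = 1 := by
  show (QuotientGroup.mk (FreeGroup.of true * FreeGroup.of true) :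
    FreeGroup Bool ⧸ Subgroup.normalClosure dihedralRels) = 1
  exact (QuotientGroup.eq_one_iff _).mpr (Subgroup.subset_normalClosure (Or.inl rfl))

lemma hT : Tg * Tg = 1 := by
  show (QuotientGroup.mk (FreeGroup.of false * FreeGroup.of false) :
    FreeGroup Bool ⧸ Subgroup.normalClosure dihedralRels) = 1
  exact (QuotientGroup.eq_one_iff _).mpr (Subgroup.subset_normalClosure (Or.inr rfl))

def R (n : ℤ) : Dinf := (S * Tg) ^ n * S

lemma Sinv : S⁻¹ = S := inv_eq_of_mul_eq_one_right hS

lemma key (a b : ℤ) : R a * R b = (S * Tg) ^ (a - b) := by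
  have h1 : (S * Tg)⁻¹ = S * (S * Tg) * S⁻¹ := by
    rw [Sinv, mul_inv_rev, inv_eq_of_mul_eq_one_right hT, Sinv]
    rw [show S * (S * Tg) * S = (S * S) * (Tg * S) by group, hS, one_mul]
  have : R a * R b = (S * Tg) ^ a * (S * (S * Tg) ^ b * S⁻¹) := by
    rw [R, R, Sinv]; group
  rw [this, ← conj_zpow, ← h1, inv_zpow, ← zpow_neg, ← zpow_add, sub_eq_add_neg]

lemma Rsq (a : ℤ) : R a * R a = 1 := by rw [key, sub_self, zpow_zero]

lemma Rinv (a : ℤ) : (R a)⁻¹ = R a := inv_eq_of_mul_eq_one_right (Rsq a)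

lemma shift (k m : ℤ) : (S * Tg) ^ k * R m = R (k + m) := by
  rw [R, R, ← mul_assoc, ← zpow_add]

lemma Rconj (a b : ℤ) : (R b)⁻¹ * R a * R b = R (2 * b - a) := by
  rw [Rinv, key, shift]
  congr 1; ring
end St17

namespace St17

lemma move0 (a b c : ℤ) :
    HurwitzMove ![R a, R b, R c] ![R b, R (2*b-a), R c] := by
  refine ⟨0, by norm_num, ?_, ?_, ?_⟩
  · simp [Fin.mk_one]
  · simp only [Fin.val_zero, show ((⟨0+1, by norm_num⟩ : Fin 3)) = 1 by rfl, Fin.isValue,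
      Matrix.cons_val_one, Matrix.head_cons, Matrix.cons_val_zero]
    rw [Rconj]
  · intro j h0 h1
    fin_cases j <;> simp_all [Fin.mk_one]

lemma move1 (a b c : ℤ) :
    HurwitzMove ![R a, R b, R c] ![R a, R c, R (2*c-b)] := by
  refine ⟨1, by norm_num, ?_, ?_, ?_⟩
  · simp [show ((⟨1+1, by norm_num⟩ : Fin 3)) = 2 by rfl]
  · simp only [Fin.val_one, show ((⟨1+1, by norm_num⟩ : Fin 3)) = 2 by rfl, Fin.isValue,
      Matrix.cons_val_two, Matrix.tail_cons, Matrix.head_cons, Matrix.cons_val_one,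
      Matrix.cons_val_zero]
    rw [Rconj]
  · intro j h0 h1
    fin_cases j <;> simp_all [show ((⟨1+1, by norm_num⟩ : Fin 3)) = 2 by rfl]

abbrev O (a b c a' b' c' : ℤ) : Prop :=
  SameHurwitzOrbit ![R a, R b, R c] ![R a', R b', R c']

lemma O.refl (a b c : ℤ) : O a b c a b c := Relation.EqvGen.refl _

lemma O.trans {a b c d e f g h i : ℤ} (h1 : O a b c d e f) (h2 : O d e f g h i) :
    O a b c g h i := Relation.EqvGen.trans _ _ _ h1 h2

lemma Om0 (a b c : ℤ) : O a b c b (2*b-a) c := Relation.EqvGen.rel _ _ (move0 a b c)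
lemma Om1 (a b c : ℤ) : O a b c a c (2*c-b) := Relation.EqvGen.rel _ _ (move1 a b c)

lemma Om0' (a b c : ℤ) : O a b c (2*a-b) a c := by
  have := (Om0 (2*a-b) a c)
  have e : 2*a - (2*a-b) = b := by ring
  rw [e] at this
  exact Relation.EqvGen.symm _ _ this

lemma Om1' (a b c : ℤ) : O a b c a (2*b-c) b := by
  have := (Om1 a (2*b-c) b)
  have e : 2*b - (2*b-c) = c := by ring
  rw [e] at this
  exact Relation.EqvGen.symm _ _ this

/-- Reduce `|b-c|` below `|a-b|` while keeping `a-b`. -/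
lemma reduce : ∀ n : ℕ, ∀ a b c : ℤ, (b - c).natAbs = n → a ≠ b →
    ∃ a' b' c', a' - b' = a - b ∧ (b' - c').natAbs < (a - b).natAbs ∧ O a b c a' b' c' := by
  intro n
  induction n using Nat.strong_induction_on with
  | _ n ih =>
    intro a b c hn hab
    by_cases h : (b - c).natAbs < (a - b).natAbs
    · exact ⟨a, b, c, rfl, h, O.refl a b c⟩
    · by_cases h2 : (2*b - a - c).natAbs < (b - c).natAbs
      · obtain ⟨a', b', c', hd, hlt, horb⟩ :=
          ih _ (hn ▸ h2) b (2*b-a) c rfl (by omega)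
        refine ⟨a', b', c', by omega, by omega, (Om0 a b c).trans horb⟩
      · have h3 : (a - c).natAbs < (b - c).natAbs := by omega
        obtain ⟨a', b', c', hd, hlt, horb⟩ :=
          ih _ (hn ▸ h3) (2*a-b) a c rfl (by omega)
        refine ⟨a', b', c', by omega, by omega, (Om0' a b c).trans horb⟩

lemma main : ∀ n : ℕ, ∀ a b c : ℤ, (a - b).natAbs = n →
    ∃ a' c', O a b c a' a' c' := by
  intro n
  induction n using Nat.strong_induction_on with
  | _ n ih =>
    intro a b c hn
    by_cases hab : a = b
    · subst hab; exact ⟨a, c, O.refl a a c⟩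
    · obtain ⟨a1, b1, c1, hd, hlt, horb⟩ := reduce _ a b c rfl hab
      by_cases hbc : b1 = c1
      · subst hbc
        refine ⟨b1, a1, ?_⟩
        have step := (Om0 a1 b1 b1).trans (Om1 b1 (2*b1-a1) b1)
        have e : 2*b1 - (2*b1-a1) = a1 := by omega
        rw [e] at step
        exact horb.trans step
      · by_cases h2 : (a1 - c1).natAbs < n
        · obtain ⟨a', c', ho⟩ := ih _ h2 a1 c1 (2*c1-b1) rfl
          exact ⟨a', c', (horb.trans (Om1 a1 b1 c1)).trans ho⟩
        · have h3 : (a1 - (2*b1-c1)).natAbs < n := by omega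
          obtain ⟨a', c', ho⟩ := ih _ h3 a1 (2*b1-c1) b1 rfl
          exact ⟨a', c', (horb.trans (Om1' a1 b1 c1)).trans ho⟩

end St17


/-- Every triple of reflections of the infinite dihedral group lies in the Hurwitz orbit of a
triple whose first two entries are equal. -/
theorem stmt17 (r : Fin 3 → Dinf) (hr : ∀ i, r i ∈ DinfReflections) :
    ∃ r' : Fin 3 → Dinf,
      SameHurwitzOrbit r r' ∧ (∀ i, r' i ∈ DinfReflections) ∧ r' 0 = r' 1 := by
  obtain ⟨a, ha⟩ := hr 0
  obtain ⟨b, hb⟩ := hr 1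
  obtain ⟨c, hc⟩ := hr 2
  have hre : r = ![St17.R a, St17.R b, St17.R c] := by
    funext j
    fin_cases j
    · exact ha.symm
    · exact hb.symm
    · exact hc.symm
  obtain ⟨a', c', ho⟩ := St17.main _ a b c rfl
  refine ⟨![St17.R a', St17.R a', St17.R c'], ?_, ?_, by simp⟩
  · rw [hre]; exact ho
  · intro i
    fin_cases i
    · exact ⟨a', rfl⟩
    · exact ⟨a', rfl⟩
    · exact ⟨c', rfl⟩
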